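/- Assume the moment condition, and assume in addition that the sequence of partitions is geometric, i.e. there exist C < ∞ and λ > 0 with δ_n ≤ C·e^{−λn} for all n. Then for every t ∈ Q, the sequence Θ_{t,n} converges almost surely (as well as in L²) to the limit Θ_t. -/

import Mathlib

open MeasureTheory Filter

/-- Setup for the discrete Doob–Meyer approximation scheme: a submartingale
`(L_t)_{t ∈ [0,1]}` with `L 0 = 0` with respect to a filtration `F`, an increasing
sequence of partitions `Q n = {r n 0 < ⋯ < r n (k n)}` of `[0,1]` with meshes
`δ n → 0`, and the associated increasing processes `Θ n`, defined on the points of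
`Q n` by `Θ n 0 = 0` and
`Θ n (r n (j+1)) = Θ n (r n j) + 𝔼[L (r n (j+1)) - L (r n j) | F (r n j)]`. -/
structure DMSetup (Ω : Type) [m0 : MeasurableSpace Ω] (μ : Measure Ω) where
  F : Filtration ℝ m0
  L : ℝ → Ω → ℝ
  hLadapted : ∀ t ∈ Set.Icc (0 : ℝ) 1, StronglyMeasurable[F t] (L t)
  hLint : ∀ t ∈ Set.Icc (0 : ℝ) 1, Integrable (L t) μ
  hLsub : ∀ s t : ℝ, s ∈ Set.Icc (0 : ℝ) 1 → t ∈ Set.Icc (0 : ℝ) 1 → s ≤ t →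
    L s ≤ᵐ[μ] μ[L t | F s]
  hL0 : L 0 = 0
  k : ℕ → ℕ
  hk : ∀ n, 0 < k n
  r : ℕ → ℕ → ℝ
  hr0 : ∀ n, r n 0 = 0
  hr1 : ∀ n, r n (k n) = 1
  hrmono : ∀ n, StrictMonoOn (r n) (Set.Iic (k n))
  hincr : ∀ n, ∀ j ≤ k n, ∃ i ≤ k (n + 1), r (n + 1) i = r n j
  δ : ℕ → ℝ
  hδ : ∀ n, ∀ j < k n, r n (j + 1) - r n j ≤ δ n
  hδ0 : Tendsto δ atTop (nhds 0)
  Θ : ℕ → ℝ → Ω → ℝ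
  hΘ0 : ∀ n, Θ n 0 = 0
  hΘrec : ∀ n, ∀ j < k n,
    Θ n (r n (j + 1)) = Θ n (r n j) + μ[L (r n (j + 1)) - L (r n j) | F (r n j)]

/-- The moment condition: each `Θ n` is square-integrable at the partition points, and
`𝔼[(Θ_{t,n} - Θ_{s,n})²] ≤ c (t - s)^(β+1)` for all `s < t` in `Q n`. -/
def DMSetup.MomentCond {Ω : Type} [m0 : MeasurableSpace Ω] {μ : Measure Ω}
    (S : DMSetup Ω μ) (c β : ℝ) : Prop :=
  (∀ n, ∀ j ≤ S.k n, MemLp (S.Θ n (S.r n j)) 2 μ) ∧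
  (∀ n, ∀ i j : ℕ, i ≤ j → j ≤ S.k n →
    (∫ ω, (S.Θ n (S.r n j) ω - S.Θ n (S.r n i) ω) ^ 2 ∂μ) ≤
      c * (S.r n j - S.r n i) ^ (β + 1))

namespace DMSetup

variable {Ω : Type} [m0 : MeasurableSpace Ω] {μ : Measure Ω}

lemma r_monoOn (S : DMSetup Ω μ) (n : ℕ) : MonotoneOn (S.r n) (Set.Iic (S.k n)) :=
  (S.hrmono n).monotoneOn

lemma r_le_r (S : DMSetup Ω μ) {n i j : ℕ} (hij : i ≤ j) (hj : j ≤ S.k n) :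
    S.r n i ≤ S.r n j :=
  S.r_monoOn n (Set.mem_Iic.2 (hij.trans hj)) (Set.mem_Iic.2 hj) hij

lemma r_lt_r (S : DMSetup Ω μ) {n i j : ℕ} (hij : i < j) (hj : j ≤ S.k n) :
    S.r n i < S.r n j :=
  S.hrmono n (Set.mem_Iic.2 (hij.le.trans hj)) (Set.mem_Iic.2 hj) hij

lemma r_mem_Icc (S : DMSetup Ω μ) {n j : ℕ} (hj : j ≤ S.k n) :
    S.r n j ∈ Set.Icc (0 : ℝ) 1 := by
  constructor
  · rw [← S.hr0 n]; exact S.r_le_r (Nat.zero_le _) hj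
  · rw [← S.hr1 n]; exact S.r_le_r hj le_rfl

lemma delta_pos (S : DMSetup Ω μ) (n : ℕ) : 0 < S.δ n := by
  have h := S.hδ n 0 (S.hk n)
  have := S.r_lt_r (n := n) (i := 0) (j := 1) Nat.zero_lt_one (S.hk n)
  linarith

lemma theta_sub_sum (S : DMSetup Ω μ) (n : ℕ) {a b : ℕ} (hab : a ≤ b) (hb : b ≤ S.k n) :
    S.Θ n (S.r n b) - S.Θ n (S.r n a) =
      ∑ p ∈ Finset.Ico a b, μ[S.L (S.r n (p + 1)) - S.L (S.r n p) | S.F (S.r n p)] := by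
  induction b, hab using Nat.le_induction with
  | base => simp
  | succ b hab ih =>
    have hb' : b < S.k n := hb
    rw [Finset.sum_Ico_succ_top hab, ← ih (le_of_lt hb'), S.hΘrec n b hb']
    abel

lemma integrable_mul_L2 {f g : Ω → ℝ} (hf : MemLp f 2 μ) (hg : MemLp g 2 μ) :
    Integrable (f * g) μ := by
  have h1 : (1 : ENNReal) / 1 = 1 / 2 + 1 / 2 := by
    rw [div_one, ENNReal.div_add_div_same, one_add_one_eq_two,
      ENNReal.div_self two_ne_zero ENNReal.ofNat_ne_top]
  have := hg.smul (r := 1) hf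
  rw [smul_eq_mul] at this
  exact memLp_one_iff_integrable.mp this

variable [IsProbabilityMeasure μ]

lemma dm_step (S : DMSetup Ω μ) {c β : ℝ} (hβ : 0 < β) (hc : 0 ≤ c)
    (hmom : S.MomentCond c β) (n : ℕ) {j : ℕ} (hj : j ≤ S.k n) :
    ∫ ω, (S.Θ (n + 1) (S.r n j) ω - S.Θ n (S.r n j) ω) ^ 2 ∂μ ≤ c * S.δ n ^ β := by
  classical
  -- the refinement map
  have hφ : ∀ i, i ≤ S.k n → ∃ p ≤ S.k (n + 1), S.r (n + 1) p = S.r n i := S.hincr n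
  set φ : ℕ → ℕ := fun i => if h : i ≤ S.k n then (hφ i h).choose else 0 with hφdef
  have hφk : ∀ i (h : i ≤ S.k n), φ i ≤ S.k (n + 1) := by
    intro i h; simp only [hφdef, dif_pos h]; exact (hφ i h).choose_spec.1
  have hφr : ∀ i (h : i ≤ S.k n), S.r (n + 1) (φ i) = S.r n i := by
    intro i h; simp only [hφdef, dif_pos h]; exact (hφ i h).choose_spec.2
  have hφmono : ∀ {i i'}, i < i' → i' ≤ S.k n → φ i < φ i' := by
    intro i i' hii' hi'
    by_contra hcon
    push_neg at hcon
    have h1 : S.r (n + 1) (φ i') ≤ S.r (n + 1) (φ i) :=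
      S.r_le_r hcon (hφk i (hii'.le.trans hi'))
    rw [hφr i (hii'.le.trans hi'), hφr i' hi'] at h1
    exact absurd h1 (not_le.2 (S.r_lt_r hii' hi'))
  -- the three families of functions
  set Z : ℕ → Ω → ℝ := fun i => S.Θ (n + 1) (S.r n (i + 1)) - S.Θ (n + 1) (S.r n i) with hZdef
  set W : ℕ → Ω → ℝ :=
    fun i => μ[S.L (S.r n (i + 1)) - S.L (S.r n i) | S.F (S.r n i)] with hWdef
  set X : ℕ → Ω → ℝ := fun i => Z i - W i with hXdef
  -- basic facts
  have hW_eq : ∀ i, i < j → W i = S.Θ n (S.r n (i + 1)) - S.Θ n (S.r n i) := by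
    intro i hi
    have h := S.hΘrec n i (lt_of_lt_of_le hi hj)
    rw [hWdef]
    rw [h]; abel
  have hW2 : ∀ i, i < j → MemLp (W i) 2 μ := by
    intro i hi
    rw [hW_eq i hi]
    exact (hmom.1 n (i + 1) (hi.trans_le hj)).sub (hmom.1 n i ((Nat.le_of_lt hi).trans hj))
  have hZ2 : ∀ i, i < j → MemLp (Z i) 2 μ := by
    intro i hi
    have h1 : i + 1 ≤ S.k n := hi.trans_le hj
    have h2 : i ≤ S.k n := (Nat.le_of_lt hi).trans hj
    rw [hZdef]
    simp only [← hφr (i + 1) h1, ← hφr i h2]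
    exact (hmom.1 (n + 1) _ (hφk _ h1)).sub (hmom.1 (n + 1) _ (hφk _ h2))
  have hX2 : ∀ i, i < j → MemLp (X i) 2 μ := fun i hi => (hZ2 i hi).sub (hW2 i hi)
  have hZsum : ∀ i, i < j → Z i = ∑ p ∈ Finset.Ico (φ i) (φ (i + 1)),
      μ[S.L (S.r (n + 1) (p + 1)) - S.L (S.r (n + 1) p) | S.F (S.r (n + 1) p)] := by
    intro i hi
    have h1 : i + 1 ≤ S.k n := hi.trans_le hj
    have h2 : i ≤ S.k n := (Nat.le_of_lt hi).trans hj
    have h := S.theta_sub_sum (n + 1) (a := φ i) (b := φ (i + 1))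
      (hφmono (Nat.lt_succ_self i) h1).le (hφk _ h1)
    rw [hφr (i + 1) h1, hφr i h2] at h
    rw [hZdef]; exact h
  have hZcond : ∀ i, i < j → μ[Z i | S.F (S.r n i)] =ᵐ[μ] W i := by
    intro i hi
    have h1 : i + 1 ≤ S.k n := hi.trans_le hj
    have h2 : i ≤ S.k n := (Nat.le_of_lt hi).trans hj
    rw [hZsum i hi]
    refine (condExp_finsetSum (fun p _ => integrable_condExp) _).trans ?_
    have hterm : ∀ p ∈ Finset.Ico (φ i) (φ (i + 1)),
        μ[μ[S.L (S.r (n + 1) (p + 1)) - S.L (S.r (n + 1) p) | S.F (S.r (n + 1) p)]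
          | S.F (S.r n i)] =ᵐ[μ]
        μ[S.L (S.r (n + 1) (p + 1)) - S.L (S.r (n + 1) p) | S.F (S.r n i)] := by
      intro p hp
      obtain ⟨hp1, hp2⟩ := Finset.mem_Ico.1 hp
      have hpk : p ≤ S.k (n + 1) := (hp2.le.trans (hφk _ h1))
      have hrle : S.r n i ≤ S.r (n + 1) p := by
        rw [← hφr i h2]
        exact S.r_le_r hp1 hpk
      exact condExp_condExp_of_le (S.F.mono hrle) (S.F.le _)
    refine (eventuallyEq_sum hterm).trans ?_
    refine (condExp_finsetSum (fun p hp => ?_) _).symm.trans ?_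
    · obtain ⟨hp1, hp2⟩ := Finset.mem_Ico.1 hp
      have hpk : p + 1 ≤ S.k (n + 1) := hp2.trans_le (hφk _ h1)
      exact (S.hLint _ (S.r_mem_Icc hpk)).sub (S.hLint _ (S.r_mem_Icc (Nat.le_of_succ_le hpk)))
    · have htel : ∑ p ∈ Finset.Ico (φ i) (φ (i + 1)),
          (S.L (S.r (n + 1) (p + 1)) - S.L (S.r (n + 1) p)) =
          S.L (S.r n (i + 1)) - S.L (S.r n i) := by
        rw [Finset.sum_Ico_eq_sub _ ((hφmono (Nat.lt_succ_self i) h1).le),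
          Finset.sum_range_sub (fun p => S.L (S.r (n + 1) p)),
          Finset.sum_range_sub (fun p => S.L (S.r (n + 1) p)),
          hφr (i + 1) h1, hφr i h2]
        abel
      rw [htel, hWdef]
  have hXcond : ∀ i, i < j → μ[X i | S.F (S.r n i)] =ᵐ[μ] 0 := by
    intro i hi
    have hWc : μ[W i | S.F (S.r n i)] = W i :=
      condExp_of_stronglyMeasurable (S.F.le _) stronglyMeasurable_condExp integrable_condExp
    rw [hXdef]
    refine (condExp_sub ((hZ2 i hi).integrable one_le_two) integrable_condExp _).trans ?_
    rw [hWc]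
    filter_upwards [hZcond i hi] with ω hω
    simp only [Pi.sub_apply, Pi.zero_apply, hω, sub_self]
  have hXsm : ∀ i, i < j → StronglyMeasurable[S.F (S.r n (i + 1))] (X i) := by
    intro i hi
    have h1 : i + 1 ≤ S.k n := hi.trans_le hj
    have h2 : i ≤ S.k n := (Nat.le_of_lt hi).trans hj
    have hZsm : StronglyMeasurable[S.F (S.r n (i + 1))] (Z i) := by
      have hfun : Z i = fun ω => ∑ p ∈ Finset.Ico (φ i) (φ (i + 1)),
          (μ[S.L (S.r (n + 1) (p + 1)) - S.L (S.r (n + 1) p)|S.F (S.r (n + 1) p)]) ω := by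
        rw [hZsum i hi]; funext ω; simp [Finset.sum_apply]
      rw [hfun]
      refine Finset.stronglyMeasurable_fun_sum _ (fun p hp => ?_)
      obtain ⟨hp1, hp2⟩ := Finset.mem_Ico.1 hp
      have hrle : S.r (n + 1) p ≤ S.r n (i + 1) := by
        rw [← hφr (i + 1) h1]
        exact S.r_le_r hp2.le (hφk _ h1)
      exact stronglyMeasurable_condExp.mono (S.F.mono hrle)
    have hWsm : StronglyMeasurable[S.F (S.r n (i + 1))] (W i) :=
      stronglyMeasurable_condExp.mono (S.F.mono (S.r_le_r (Nat.le_succ i) h1))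
    rw [hXdef]
    exact hZsm.sub hWsm
  have hXint : ∀ i, i < j → Integrable (X i) μ := fun i hi => (hX2 i hi).integrable one_le_two
  have hXmul : ∀ i i', i < j → i' < j → Integrable (X i * X i') μ :=
    fun i i' hi hi' => integrable_mul_L2 (hX2 i hi) (hX2 i' hi')
  have horth : ∀ i i', i < i' → i' < j → ∫ ω, X i ω * X i' ω ∂μ = 0 := by
    intro i i' hii' hi'
    have hi : i < j := hii'.trans hi'
    have hG : S.F (S.r n (i + 1)) ≤ m0 := S.F.le _
    have hsmG : StronglyMeasurable[S.F (S.r n (i + 1))] (X i) := hXsm i hi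
    have h3 : μ[X i' | S.F (S.r n (i + 1))] =ᵐ[μ] 0 := by
      have hle : S.F (S.r n (i + 1)) ≤ S.F (S.r n i') :=
        S.F.mono (S.r_le_r hii' (hi'.le.trans hj))
      refine (condExp_condExp_of_le hle (S.F.le _)).symm.trans ?_
      refine (condExp_congr_ae (hXcond i' hi')).trans ?_
      rw [condExp_zero]
    have h1 : ∫ ω, X i ω * X i' ω ∂μ =
        ∫ ω, (μ[X i * X i' | S.F (S.r n (i + 1))]) ω ∂μ := by
      rw [integral_condExp hG]
      rfl
    have h2 : μ[X i * X i' | S.F (S.r n (i + 1))] =ᵐ[μ]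
        X i * μ[X i' | S.F (S.r n (i + 1))] :=
      condExp_mul_of_stronglyMeasurable_left hsmG (hXmul i i' hi hi') (hXint i' hi')
    have h4 : X i * μ[X i' | S.F (S.r n (i + 1))] =ᵐ[μ] 0 := by
      filter_upwards [h3] with ω hω
      simp [Pi.mul_apply, hω]
    rw [h1, integral_congr_ae (h2.trans h4)]
    simp
  have hdiag : ∀ i, i < j →
      ∫ ω, X i ω * X i ω ∂μ ≤ c * S.δ n ^ β * (S.r n (i + 1) - S.r n i) := by
    intro i hi
    have h1 : i + 1 ≤ S.k n := hi.trans_le hj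
    have h2 : i ≤ S.k n := (Nat.le_of_lt hi).trans hj
    have hs : S.F (S.r n i) ≤ m0 := S.F.le _
    have hWsm : StronglyMeasurable[S.F (S.r n i)] (W i) := stronglyMeasurable_condExp
    have hWZint : Integrable (W i * Z i) μ := integrable_mul_L2 (hW2 i hi) (hZ2 i hi)
    have hZW : ∫ ω, W i ω * Z i ω ∂μ = ∫ ω, W i ω * W i ω ∂μ := by
      have e1 : ∫ ω, (μ[W i * Z i | S.F (S.r n i)]) ω ∂μ = ∫ ω, W i ω * Z i ω ∂μ :=
        integral_condExp hs
      have e2 : μ[W i * Z i | S.F (S.r n i)] =ᵐ[μ] W i * μ[Z i | S.F (S.r n i)] :=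
        condExp_mul_of_stronglyMeasurable_left hWsm hWZint ((hZ2 i hi).integrable one_le_two)
      have e3 : W i * μ[Z i | S.F (S.r n i)] =ᵐ[μ] W i * W i := by
        filter_upwards [hZcond i hi] with ω hω
        simp [Pi.mul_apply, hω]
      rw [← e1, integral_congr_ae (e2.trans e3)]
      rfl
    have hZZint : Integrable (fun ω => Z i ω * Z i ω) μ :=
      integrable_mul_L2 (hZ2 i hi) (hZ2 i hi)
    have hWWint : Integrable (fun ω => W i ω * W i ω) μ :=
      integrable_mul_L2 (hW2 i hi) (hW2 i hi)
    have hWZint2 : Integrable (fun ω => 2 * (W i ω * Z i ω)) μ := hWZint.const_mul 2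
    have e4 : ∫ ω, X i ω * X i ω ∂μ =
        ∫ ω, Z i ω * Z i ω ∂μ - ∫ ω, W i ω * W i ω ∂μ := by
      have hfun : (fun ω => X i ω * X i ω) =
          fun ω => (Z i ω * Z i ω - 2 * (W i ω * Z i ω)) + W i ω * W i ω := by
        funext ω
        have hx : X i ω = Z i ω - W i ω := rfl
        rw [hx]; ring
      have hsub : Integrable (fun ω => Z i ω * Z i ω - 2 * (W i ω * Z i ω)) μ :=
        hZZint.sub hWZint2
      rw [hfun, integral_add hsub hWWint, integral_sub hZZint hWZint2,
        integral_const_mul, hZW]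
      ring
    have e5 : ∫ ω, X i ω * X i ω ∂μ ≤ ∫ ω, Z i ω * Z i ω ∂μ := by
      rw [e4]
      have h0 : 0 ≤ ∫ ω, W i ω * W i ω ∂μ := integral_nonneg (fun ω => mul_self_nonneg _)
      linarith
    have e6 : ∫ ω, Z i ω * Z i ω ∂μ ≤ c * (S.r n (i + 1) - S.r n i) ^ (β + 1) := by
      have h := hmom.2 (n + 1) (φ i) (φ (i + 1)) (hφmono (Nat.lt_succ_self i) h1).le (hφk _ h1)
      rw [hφr (i + 1) h1, hφr i h2] at h
      refine le_trans (le_of_eq ?_) h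
      refine integral_congr_ae (Eventually.of_forall (fun ω => ?_))
      simp only [pow_two]
      rfl
    have hΔpos : 0 < S.r n (i + 1) - S.r n i :=
      sub_pos.2 (S.r_lt_r (Nat.lt_succ_self i) h1)
    have hsplit : (S.r n (i + 1) - S.r n i) ^ (β + 1) =
        (S.r n (i + 1) - S.r n i) ^ β * (S.r n (i + 1) - S.r n i) := by
      rw [Real.rpow_add hΔpos, Real.rpow_one]
    have hmesh : (S.r n (i + 1) - S.r n i) ^ β ≤ S.δ n ^ β :=
      Real.rpow_le_rpow hΔpos.le (S.hδ n i (hi.trans_le hj)) hβ.le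
    calc ∫ ω, X i ω * X i ω ∂μ ≤ c * (S.r n (i + 1) - S.r n i) ^ (β + 1) := e5.trans e6
      _ = c * ((S.r n (i + 1) - S.r n i) ^ β * (S.r n (i + 1) - S.r n i)) := by rw [hsplit]
      _ ≤ c * (S.δ n ^ β * (S.r n (i + 1) - S.r n i)) := by
          exact mul_le_mul_of_nonneg_left
            (mul_le_mul_of_nonneg_right hmesh hΔpos.le) hc
      _ = c * S.δ n ^ β * (S.r n (i + 1) - S.r n i) := by ring
  have hD : ∀ ω, S.Θ (n + 1) (S.r n j) ω - S.Θ n (S.r n j) ω =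
      ∑ i ∈ Finset.range j, X i ω := by
    intro ω
    have h1 : S.Θ n (S.r n j) = ∑ p ∈ Finset.Ico 0 j, W p := by
      have h := S.theta_sub_sum n (Nat.zero_le j) hj
      rw [S.hr0, S.hΘ0, sub_zero] at h
      exact h
    have h2 : S.Θ (n + 1) (S.r n j) = ∑ i ∈ Finset.range j, Z i := by
      have h := Finset.sum_range_sub (fun i => S.Θ (n + 1) (S.r n i)) j
      rw [S.hr0, S.hΘ0, sub_zero] at h
      exact h.symm
    rw [congrFun h1 ω, congrFun h2 ω]
    rw [Nat.Ico_zero_eq_range]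
    simp only [Finset.sum_apply]
    rw [← Finset.sum_sub_distrib]
    rfl
  have hnn : 0 ≤ c * S.δ n ^ β := mul_nonneg hc (Real.rpow_nonneg (S.delta_pos n).le _)
  calc ∫ ω, (S.Θ (n + 1) (S.r n j) ω - S.Θ n (S.r n j) ω) ^ 2 ∂μ
      = ∫ ω, ∑ i ∈ Finset.range j, ∑ i' ∈ Finset.range j, X i ω * X i' ω ∂μ := by
        refine integral_congr_ae (Eventually.of_forall (fun ω => ?_))
        simp only [hD ω, pow_two, Finset.sum_mul_sum]
    _ = ∑ i ∈ Finset.range j, ∫ ω, ∑ i' ∈ Finset.range j, X i ω * X i' ω ∂μ :=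
        integral_finset_sum _ (fun i hi => integrable_finset_sum _
          (fun i' hi' => hXmul i i' (Finset.mem_range.1 hi) (Finset.mem_range.1 hi')))
    _ = ∑ i ∈ Finset.range j, ∑ i' ∈ Finset.range j, ∫ ω, X i ω * X i' ω ∂μ :=
        Finset.sum_congr rfl (fun i hi => integral_finset_sum _
          (fun i' hi' => hXmul i i' (Finset.mem_range.1 hi) (Finset.mem_range.1 hi')))
    _ = ∑ i ∈ Finset.range j, ∫ ω, X i ω * X i ω ∂μ := by
        refine Finset.sum_congr rfl (fun i hi => ?_)
        refine Finset.sum_eq_single i (fun i' hi' hne => ?_) (fun hnotin => absurd hi hnotin)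
        rcases lt_or_gt_of_ne hne with hlt | hgt
        · have hcomm : ∫ ω, X i ω * X i' ω ∂μ = ∫ ω, X i' ω * X i ω ∂μ :=
            integral_congr_ae (Eventually.of_forall (fun ω => mul_comm _ _))
          rw [hcomm]
          exact horth i' i hlt (Finset.mem_range.1 hi)
        · exact horth i i' hgt (Finset.mem_range.1 hi')
    _ ≤ ∑ i ∈ Finset.range j, c * S.δ n ^ β * (S.r n (i + 1) - S.r n i) :=
        Finset.sum_le_sum (fun i hi => hdiag i (Finset.mem_range.1 hi))
    _ = c * S.δ n ^ β * (S.r n j - S.r n 0) := by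
        rw [← Finset.mul_sum, Finset.sum_range_sub (S.r n)]
    _ ≤ c * S.δ n ^ β * 1 := by
        refine mul_le_mul_of_nonneg_left ?_ hnn
        rw [S.hr0, sub_zero]
        exact (S.r_mem_Icc hj).2
    _ = c * S.δ n ^ β := mul_one _

lemma eLpNorm_two_eq {f : Ω → ℝ} (hf : MemLp f 2 μ) :
    eLpNorm f 2 μ = ENNReal.ofReal ((∫ ω, (f ω) ^ 2 ∂μ) ^ (2⁻¹ : ℝ)) := by
  rw [hf.eLpNorm_eq_integral_rpow_norm two_ne_zero ENNReal.ofNat_ne_top]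
  simp only [ENNReal.toReal_ofNat, Real.norm_eq_abs, Real.rpow_two, sq_abs]

lemma cauchy_tail_bound [IsProbabilityMeasure μ] (u : ℕ → Ω → ℝ) (g : Ω → ℝ)
    (hu : ∀ n, MemLp (u n) 2 μ)
    (hconv : ∀ᵐ ω ∂μ, Tendsto (fun n => u n ω) atTop (nhds (g ω))) (n : ℕ) :
    eLpNorm (fun ω => u n ω - g ω) 2 μ ≤
      ∑' i, eLpNorm (fun ω => u (i + n + 1) ω - u (i + n) ω) 2 μ := by
  have hfat := Lp.eLpNorm_lim_le_liminf_eLpNorm (μ := μ) (p := 2)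
    (f := fun m ω => u n ω - u (m + n) ω)
    (fun m => ((hu n).1).sub ((hu (m + n)).1)) (fun ω => u n ω - g ω) ?_
  · refine hfat.trans ?_
    have hb : ∀ m, eLpNorm (fun ω => u n ω - u (m + n) ω) 2 μ ≤
        ∑' i, eLpNorm (fun ω => u (i + n + 1) ω - u (i + n) ω) 2 μ := by
      intro m
      have h1 : (fun ω => u n ω - u (m + n) ω) =
          ∑ i ∈ Finset.range m, -(u (i + n + 1) - u (i + n)) := by
        funext ω
        rw [Finset.sum_apply]
        have h2 : ∑ i ∈ Finset.range m, (u (i + n + 1) ω - u (i + n) ω) =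
            u (m + n) ω - u (0 + n) ω := by
          rw [← Finset.sum_range_sub (fun i => u (i + n) ω) m]
          exact Finset.sum_congr rfl (fun i _ => by
            rw [show i + 1 + n = i + n + 1 from by omega])
        have h3 : ∑ i ∈ Finset.range m, (-(u (i + n + 1) - u (i + n))) ω =
            -∑ i ∈ Finset.range m, (u (i + n + 1) ω - u (i + n) ω) := by
          rw [← Finset.sum_neg_distrib]
          exact Finset.sum_congr rfl (fun i _ => rfl)
        rw [h3, h2, Nat.zero_add]
        ring
      rw [h1]
      refine le_trans (eLpNorm_sum_le (fun i _ => (((hu (i + n + 1)).1).sub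
        ((hu (i + n)).1)).neg) one_le_two) ?_
      refine le_trans (le_of_eq (Finset.sum_congr rfl (fun i _ => ?_))) 
        (ENNReal.sum_le_tsum _)
      rw [eLpNorm_neg]
      rfl
    refine le_trans (liminf_le_liminf (Eventually.of_forall hb)) ?_
    rw [liminf_const]
  · filter_upwards [hconv] with ω hω
    exact tendsto_const_nhds.sub (hω.comp (tendsto_add_atTop_nat n))

end DMSetup

/-- Under the moment condition, if the sequence of partitions is geometric (i.e.
`δ n ≤ C e^{-λ n}` for some `C < ∞` and `λ > 0`), then for every `t ∈ Q` the sequence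
`Θ_{t,n}` converges almost surely, as well as in `L²(μ)`, to the limit `Θ_t`. -/
theorem dm_as_convergence_geometric
    {Ω : Type} [m0 : MeasurableSpace Ω] {μ : Measure Ω} [IsProbabilityMeasure μ]
    (S : DMSetup Ω μ) (c β : ℝ) (hβ : 0 < β) (hmom : S.MomentCond c β)
    (hgeo : ∃ C lam : ℝ, 0 < lam ∧ ∀ n : ℕ, S.δ n ≤ C * Real.exp (-(lam * n))) :
    ∃ Θ : ℝ → Ω → ℝ, ∀ t : ℝ, (∃ n, ∃ j ≤ S.k n, S.r n j = t) →
      Tendsto (fun n => ∫ ω, (S.Θ n t ω - Θ t ω) ^ 2 ∂μ) atTop (nhds 0) ∧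
      ∀ᵐ ω ∂μ, Tendsto (fun n => S.Θ n t ω) atTop (nhds (Θ t ω)) := by
  classical
  obtain ⟨C, lam, hlam, hgeo⟩ := hgeo
  have hc : 0 ≤ c := by
    have h := hmom.2 0 0 (S.k 0) (Nat.zero_le _) le_rfl
    have hnn : 0 ≤ ∫ ω, (S.Θ 0 (S.r 0 (S.k 0)) ω - S.Θ 0 (S.r 0 0) ω) ^ 2 ∂μ :=
      integral_nonneg fun ω => sq_nonneg _
    rw [S.hr1, S.hr0, sub_zero, Real.one_rpow, mul_one] at h
    rw [S.hr1, S.hr0] at hnn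
    linarith
  have hC : 0 < C := by
    have h := hgeo 0
    have h2 := S.delta_pos 0
    simp only [Nat.cast_zero, mul_zero, neg_zero, Real.exp_zero, mul_one] at h
    linarith
  set q : ℝ := Real.exp (-(lam * β / 2)) with hq
  have hq0 : 0 < q := Real.exp_pos _
  have hq1 : q < 1 := by
    rw [hq, Real.exp_lt_one_iff]
    nlinarith
  set K : ℝ := (c * C ^ β) ^ (2⁻¹ : ℝ) with hK
  have hK0 : 0 ≤ K := Real.rpow_nonneg (mul_nonneg hc (Real.rpow_nonneg hC.le β)) _
  have hbound : ∀ m : ℕ, (c * S.δ m ^ β) ^ (2⁻¹ : ℝ) ≤ K * q ^ m := by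
    intro m
    have h1 : S.δ m ≤ C * Real.exp (-(lam * m)) := hgeo m
    have h2 : (0:ℝ) < Real.exp (-(lam * m)) := Real.exp_pos _
    have h3 : c * S.δ m ^ β ≤ c * (C * Real.exp (-(lam * m))) ^ β :=
      mul_le_mul_of_nonneg_left (Real.rpow_le_rpow (S.delta_pos m).le h1 hβ.le) hc
    have h4 : (c * S.δ m ^ β) ^ (2⁻¹:ℝ) ≤ (c * (C * Real.exp (-(lam * m))) ^ β) ^ (2⁻¹:ℝ) :=
      Real.rpow_le_rpow (mul_nonneg hc (Real.rpow_nonneg (S.delta_pos m).le β)) h3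
        (by norm_num)
    refine h4.trans (le_of_eq ?_)
    rw [Real.mul_rpow hC.le h2.le, ← mul_assoc,
      Real.mul_rpow (mul_nonneg hc (Real.rpow_nonneg hC.le β)) (Real.rpow_nonneg h2.le β)]
    congr 1
    rw [← Real.exp_mul, ← Real.exp_mul, hq, ← Real.exp_nat_mul]
    congr 1
    ring
  refine ⟨fun s ω => limUnder atTop fun n => S.Θ n s ω, fun t ht => ?_⟩
  obtain ⟨m₀, j₀, hj₀, hrj₀⟩ := ht
  have hJ : ∀ n : ℕ, ∃ j ≤ S.k (n + m₀), S.r (n + m₀) j = t := by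
    intro n
    induction n with
    | zero =>
      refine ⟨j₀, ?_, ?_⟩
      · rw [Nat.zero_add]; exact hj₀
      · rw [Nat.zero_add]; exact hrj₀
    | succ n ih =>
      obtain ⟨j, hjk, hjr⟩ := ih
      obtain ⟨p, hpk, hpr⟩ := S.hincr (n + m₀) j hjk
      have he : n + 1 + m₀ = n + m₀ + 1 := by omega
      refine ⟨p, ?_, ?_⟩
      · rw [he]; exact hpk
      · rw [he, hpr, hjr]
  choose J hJk hJr using hJ
  have hu2 : ∀ n, MemLp (S.Θ (n + m₀) t) 2 μ := fun n => by
    rw [← hJr n]; exact hmom.1 _ _ (hJk n)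
  have hstep : ∀ n, ∫ ω, (S.Θ (n + 1 + m₀) t ω - S.Θ (n + m₀) t ω) ^ 2 ∂μ ≤
      c * S.δ (n + m₀) ^ β := by
    intro n
    have h := S.dm_step hβ hc hmom (n + m₀) (hJk n)
    rw [hJr n] at h
    have he : n + 1 + m₀ = n + m₀ + 1 := by omega
    rw [he]
    exact h
  have hd2 : ∀ n, MemLp (fun ω => S.Θ (n + 1 + m₀) t ω - S.Θ (n + m₀) t ω) 2 μ :=
    fun n => (hu2 (n + 1)).sub (hu2 n)
  set a : ℕ → ENNReal := fun n =>
    eLpNorm (fun ω => S.Θ (n + 1 + m₀) t ω - S.Θ (n + m₀) t ω) 2 μ with ha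
  have hab : ∀ n, a n ≤ ENNReal.ofReal (K * q ^ n) := by
    intro n
    refine le_trans (le_of_eq (DMSetup.eLpNorm_two_eq (hd2 n))) ?_
    refine ENNReal.ofReal_le_ofReal ?_
    refine le_trans (Real.rpow_le_rpow (integral_nonneg fun ω => sq_nonneg _)
      (hstep n) (by norm_num)) ?_
    refine le_trans (hbound (n + m₀)) ?_
    exact mul_le_mul_of_nonneg_left
      (pow_le_pow_of_le_one hq0.le hq1.le (Nat.le_add_right n m₀)) hK0
  have hKq0 : ∀ n : ℕ, 0 ≤ K * q ^ n := fun n => mul_nonneg hK0 (pow_nonneg hq0.le n)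
  have hgeosum : Summable (fun n : ℕ => K * q ^ n) :=
    (summable_geometric_of_lt_one hq0.le hq1).mul_left K
  have hatop : ∑' n, a n ≠ ⊤ := by
    have h1 : ∑' n, a n ≤ ∑' n, ENNReal.ofReal (K * q ^ n) := ENNReal.tsum_le_tsum hab
    rw [← ENNReal.ofReal_tsum_of_nonneg hKq0 hgeosum] at h1
    exact ne_top_of_le_ne_top ENNReal.ofReal_ne_top h1
  have haesm_d : ∀ n, AEStronglyMeasurable
      (fun ω => S.Θ (n + 1 + m₀) t ω - S.Θ (n + m₀) t ω) μ := fun n => (hd2 n).1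
  have hl1 : ∀ n, ∫⁻ ω, ‖S.Θ (n + 1 + m₀) t ω - S.Θ (n + m₀) t ω‖₊ ∂μ ≤ a n := by
    intro n
    simp only [← enorm_eq_nnnorm]
    rw [← eLpNorm_one_eq_lintegral_enorm]
    exact eLpNorm_le_eLpNorm_of_exponent_le one_le_two (haesm_d n)
  have hsumlt : ∀ᵐ ω ∂μ,
      ∑' n, (‖S.Θ (n + 1 + m₀) t ω - S.Θ (n + m₀) t ω‖₊ : ENNReal) < ⊤ := by
    refine ae_lt_top' (AEMeasurable.ennreal_tsum fun n => (haesm_d n).aemeasurable.enorm) ?_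
    simp only [← enorm_eq_nnnorm]
    rw [lintegral_tsum fun n => (haesm_d n).aemeasurable.enorm]
    exact ne_top_of_le_ne_top hatop (ENNReal.tsum_le_tsum hl1)
  have haeconv : ∀ᵐ ω ∂μ, Tendsto (fun n => S.Θ n t ω) atTop
      (nhds (limUnder atTop fun n => S.Θ n t ω)) := by
    filter_upwards [hsumlt] with ω hω
    refine tendsto_nhds_limUnder ?_
    have hsum : Summable (fun n => S.Θ (n + 1 + m₀) t ω - S.Θ (n + m₀) t ω) := by
      refine Summable.of_norm ?_
      have h2 := ENNReal.summable_toReal hω.ne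
      refine h2.congr fun n => ?_
      simp
    have hps := hsum.hasSum.tendsto_sum_nat
    have hrepr : ∀ m, S.Θ (m + m₀) t ω = S.Θ (0 + m₀) t ω +
        ∑ i ∈ Finset.range m, (S.Θ (i + 1 + m₀) t ω - S.Θ (i + m₀) t ω) := by
      intro m
      rw [Finset.sum_range_sub (fun i => S.Θ (i + m₀) t ω) m]
      ring
    refine ⟨S.Θ (0 + m₀) t ω + ∑' i, (S.Θ (i + 1 + m₀) t ω - S.Θ (i + m₀) t ω),
      (tendsto_add_atTop_iff_nat m₀).1 ?_⟩
    refine Tendsto.congr (fun m => (hrepr m).symm) ?_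
    exact tendsto_const_nhds.add hps
  have hgmeas : AEStronglyMeasurable (fun ω => limUnder atTop fun n => S.Θ n t ω) μ := by
    refine aestronglyMeasurable_of_tendsto_ae atTop (fun n => (hu2 n).1) ?_
    filter_upwards [haeconv] with ω hω
    exact (tendsto_add_atTop_iff_nat m₀).2 hω
  have htail : ∀ n, eLpNorm
      (fun ω => S.Θ (n + m₀) t ω - limUnder atTop fun k => S.Θ k t ω) 2 μ ≤
      ∑' i, a (i + n) := by
    intro n
    have h := DMSetup.cauchy_tail_bound (fun n => S.Θ (n + m₀) t)
      (fun ω => limUnder atTop fun k => S.Θ k t ω) hu2 ?_ n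
    · exact h.trans (le_of_eq (tsum_congr fun i => rfl))
    · filter_upwards [haeconv] with ω hω
      exact (tendsto_add_atTop_iff_nat m₀).2 hω
  have htailtop : ∀ n, ∑' i, a (i + n) ≠ ⊤ := by
    intro n
    refine ne_top_of_le_ne_top hatop ?_
    exact ENNReal.tsum_comp_le_tsum_of_injective (add_left_injective n) a
  have hmem : ∀ n, MemLp
      (fun ω => S.Θ (n + m₀) t ω - limUnder atTop fun k => S.Θ k t ω) 2 μ := by
    intro n
    refine ⟨((hu2 n).1).sub hgmeas, ?_⟩
    exact lt_of_le_of_lt (htail n) (lt_top_iff_ne_top.2 (htailtop n))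
  have hconvint : ∀ n,
      ∫ ω, (S.Θ (n + m₀) t ω - limUnder atTop fun k => S.Θ k t ω) ^ 2 ∂μ ≤
      ((∑' i, a (i + n)).toReal) ^ 2 := by
    intro n
    have hI : 0 ≤ ∫ ω, (S.Θ (n + m₀) t ω - limUnder atTop fun k => S.Θ k t ω) ^ 2 ∂μ :=
      integral_nonneg fun ω => sq_nonneg _
    have h2 : ENNReal.ofReal
        ((∫ ω, (S.Θ (n + m₀) t ω - limUnder atTop fun k => S.Θ k t ω) ^ 2 ∂μ) ^ (2⁻¹:ℝ)) ≤
        ∑' i, a (i + n) := by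
      exact le_trans (le_of_eq (DMSetup.eLpNorm_two_eq (hmem n)).symm) (htail n)
    have h3 : (∫ ω, (S.Θ (n + m₀) t ω - limUnder atTop fun k => S.Θ k t ω) ^ 2 ∂μ) ^ (2⁻¹:ℝ) ≤
        (∑' i, a (i + n)).toReal := by
      have h4 := ENNReal.toReal_mono (htailtop n) h2
      rwa [ENNReal.toReal_ofReal (Real.rpow_nonneg hI _)] at h4
    have h5 : ((∫ ω, (S.Θ (n + m₀) t ω - limUnder atTop fun k => S.Θ k t ω) ^ 2 ∂μ)
        ^ (2⁻¹:ℝ)) ^ (2:ℕ) =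
        ∫ ω, (S.Θ (n + m₀) t ω - limUnder atTop fun k => S.Θ k t ω) ^ 2 ∂μ := by
      rw [← Real.rpow_natCast (_ ^ (2⁻¹:ℝ)) 2, ← Real.rpow_mul hI]
      norm_num
    calc ∫ ω, (S.Θ (n + m₀) t ω - limUnder atTop fun k => S.Θ k t ω) ^ 2 ∂μ
        = ((∫ ω, (S.Θ (n + m₀) t ω - limUnder atTop fun k => S.Θ k t ω) ^ 2 ∂μ)
          ^ (2⁻¹:ℝ)) ^ (2:ℕ) := h5.symm
      _ ≤ ((∑' i, a (i + n)).toReal) ^ 2 :=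
          pow_le_pow_left₀ (Real.rpow_nonneg hI _) h3 2
  have hb0 : Tendsto (fun n => ((∑' i, a (i + n)).toReal) ^ 2) atTop (nhds 0) := by
    have h1 := ENNReal.tendsto_sum_nat_add a hatop
    have h2 : Tendsto (fun n => (∑' i, a (i + n)).toReal) atTop (nhds 0) := by
      have h3 := (ENNReal.tendsto_toReal (a := 0) (by simp)).comp h1
      simpa [Function.comp_def] using h3
    simpa using h2.pow 2
  have hL2shift : Tendsto
      (fun n => ∫ ω, (S.Θ (n + m₀) t ω - limUnder atTop fun k => S.Θ k t ω) ^ 2 ∂μ)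
      atTop (nhds 0) :=
    squeeze_zero (fun n => integral_nonneg fun ω => sq_nonneg _) hconvint hb0
  exact ⟨(tendsto_add_atTop_iff_nat m₀).1 hL2shift, haeconv⟩
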